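/- arXiv:2206.12524 — 3 statements merged into one kernel-verified Lean document; each statement's English description precedes it below -/
import Mathlib

section
/- Reduction to the reducible normal form: set U = (1/24)·(4 + (31+3√57)·(46+6√57)^{−1/3} + (100+12√57)·(46+6√57)^{−2/3}). For every real number K with −25/72 ≤ K < U there exist A ∈ GL(2,ℝ) and c ∈ (−2, 0] such that h_{1,K}(A·v) = v₁·v₂·(v₁² + c·v₁·v₂ + v₂²) for all v = (v₁, v₂) ∈ ℝ². -/
/-!
Common definitions: the quartic polynomial `hLK L K (x,y) = x⁴ − x²y² + L·x·y³ + K·y⁴` on ℝ²,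
the Hessian determinant of a function on ℝ², and the curve `Hcurve L K = H_{L,K}`,
the connected component containing (1,0) of the hyperbolic points on the level set {h = 1}.
-/

noncomputable section
open Matrix

/-- `h_{L,K}(x,y) = x⁴ − x²y² + L·x·y³ + K·y⁴`. -/
def hLK (L K : ℝ) (v : Fin 2 → ℝ) : ℝ :=
  v 0 ^ 4 - v 0 ^ 2 * v 1 ^ 2 + L * v 0 * v 1 ^ 3 + K * v 1 ^ 4

/-- Determinant of the Hessian matrix of `f : ℝ² → ℝ` at `p`. -/
def hessDet2 (f : (Fin 2 → ℝ) → ℝ) (p : Fin 2 → ℝ) : ℝ :=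
  Matrix.det (Matrix.of fun i j : Fin 2 =>
    iteratedFDeriv ℝ 2 f p ![Pi.single i 1, Pi.single j 1])

/-- `H_{L,K}`: the connected component containing `(1,0)` of
`{p ∈ ℝ² : h_{L,K}(p) = 1 and p is a hyperbolic point of h_{L,K}}`. -/
def Hcurve (L K : ℝ) : Set (Fin 2 → ℝ) :=
  connectedComponentIn {p | hLK L K p = 1 ∧ hessDet2 (hLK L K) p < 0} ![1, 0]

/-- The constant `U` of Theorem 3.2. -/
def Uconst : ℝ :=
  (1/24) * (4 + (31 + 3 * Real.sqrt 57) * (46 + 6 * Real.sqrt 57) ^ (-(1:ℝ)/3) +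
    (100 + 12 * Real.sqrt 57) * (46 + 6 * Real.sqrt 57) ^ (-(2:ℝ)/3))

set_option maxHeartbeats 1000000 in
/-- **Reduction to the reducible normal form.**
For `−25/72 ≤ K < U` there are `A ∈ GL(2,ℝ)` and `c ∈ (−2, 0]` with
`h_{1,K}(A·v) = v₁v₂(v₁² + c·v₁v₂ + v₂²)` for all `v ∈ ℝ²`. -/
theorem reduction_to_reducible_normal_form (K : ℝ)
    (hK1 : -(25/72) ≤ K) (hK2 : K < Uconst) :
    ∃ (A : Matrix (Fin 2) (Fin 2) ℝ) (c : ℝ), IsUnit A ∧ -2 < c ∧ c ≤ 0 ∧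
      ∀ v : Fin 2 → ℝ, hLK 1 K (A.mulVec v) =
        v 0 * v 1 * (v 0 ^ 2 + c * v 0 * v 1 + v 1 ^ 2) := by
  -- ### Step 1: the algebraic numbers involved in `Uconst`
  obtain ⟨s57, hs57def⟩ : ∃ x : ℝ, x = Real.sqrt 57 := ⟨_, rfl⟩
  have hs57sq : s57^2 = 57 := by rw [hs57def]; exact Real.sq_sqrt (by norm_num)
  have hs57pos : (0:ℝ) < s57 := by rw [hs57def]; exact Real.sqrt_pos.mpr (by norm_num)
  have hs57lb : 7.54 < s57 := by nlinarith
  have hs57ub : s57 < 7.56 := by nlinarith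
  have hwpos : (0:ℝ) < 46 + 6*s57 := by linarith
  obtain ⟨c, hcdef⟩ : ∃ x : ℝ, x = (46 + 6*s57) ^ ((1:ℝ)/3) := ⟨_, rfl⟩
  have hcpos : 0 < c := hcdef ▸ Real.rpow_pos_of_pos hwpos _
  have hc3 : c^3 = 46 + 6*s57 := by
    rw [hcdef, ← Real.rpow_natCast ((46+6*s57) ^ ((1:ℝ)/3)) 3, ← Real.rpow_mul hwpos.le]
    norm_num
  have hclb : 4.5 < c := by nlinarith [sq_nonneg (c - 4.5), sq_nonneg (c + 4.5), hcpos.le]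
  have hcub : c < 4.51 := by nlinarith [sq_nonneg (c - 4.51), sq_nonneg (c + 4.51), hcpos.le]
  have hUc : Uconst = (1/24) * (4 + (31+3*s57)/c + (100+12*s57)/c^2) := by
    have h1 : (46 + 6*s57) ^ (-(1:ℝ)/3) = 1/c := by
      rw [neg_div, Real.rpow_neg hwpos.le, hcdef]
      exact (one_div _).symm
    have h2 : (46 + 6*s57) ^ (-(2:ℝ)/3) = 1/c^2 := by
      rw [neg_div, Real.rpow_neg hwpos.le, hcdef, ← Real.rpow_natCast _ 2,
        ← Real.rpow_mul hwpos.le]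
      norm_num
    rw [Uconst, ← hs57def, h1, h2]
    ring
  obtain ⟨r, hrdef⟩ : ∃ x : ℝ, x = (9+s57)/c := ⟨_, rfl⟩
  have hrpos : 0 < r := by rw [hrdef]; positivity
  have hcr : c * r = 9 + s57 := by rw [hrdef]; field_simp
  have hr2 : r^2 = 3*c := by
    rw [hrdef, div_pow, div_eq_iff (by positivity)]
    linear_combination hs57sq - 3*hc3
  have hrlb : 3.6 < r := by nlinarith
  have hrub : r < 3.7 := by nlinarith
  obtain ⟨t, htdef⟩ : ∃ x : ℝ, x = -(2+c)/(2*r) := ⟨_, rfl⟩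
  have he1 : 2*r*t = -(2+c) := by rw [htdef]; field_simp
  have ht3 : 4*t^3 - 2*t + 1 = 0 := by
    have h0 : (2*r)^3*(4*t^3-2*t+1) = 4*(2*r*t)^3 - 2*(2*r*t)*(2*r)^2 + (2*r)^3 := by ring
    have h2 : 4*(2*r*t)^3 - 2*(2*r*t)*(2*r)^2 + (2*r)^3 = 0 := by
      rw [he1]
      linear_combination (8*(2+c)+8*r)*hr2 + (-4)*hc3 + 24*hcr
    have h3 : (2*r)^3 ≠ 0 := by positivity
    exact (mul_eq_zero.mp (h0.trans h2)).resolve_left h3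
  have htlb : -0.89 < t := by
    rw [htdef, neg_div, neg_lt_neg_iff, div_lt_iff₀ (by linarith)]
    nlinarith
  have htub : t < -0.88 := by
    rw [htdef, neg_div, neg_lt_neg_iff, lt_div_iff₀ (by linarith)]
    nlinarith
  -- ### Step 2: `Uconst = (2t² - 3t)/4` for the root `t` of `4t³ - 2t + 1`
  have hsq : (2*r*t)^2 = (-(2+c))^2 := by rw [he1]
  have e2 : 12*c*t^2 = (2+c)^2 := by linear_combination hsq + (-4*t^2)*hr2
  have e3 : 48*t = -(c*(2+c)*(9-s57)) := by
    linear_combination (c*(9-s57))*he1 + (-2*t*(9-s57))*hcr + (2*t)*hs57sq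
  have hUt : Uconst = (2*t^2 - 3*t)/4 := by
    rw [hUc]
    apply mul_left_cancel₀ (show (48:ℝ)*c^2 ≠ 0 by positivity)
    have expand : 48*c^2*((1/24) * (4 + (31+3*s57)/c + (100+12*s57)/c^2))
        = 8*c^2 + 2*c*(31+3*s57) + 2*(100+12*s57) := by
      field_simp
      ring
    rw [expand]
    linear_combination (-2*c)*e2 + ((3:ℝ)/4*c^2)*e3
      + (-2 - (3:ℝ)/4*(2+c)*(9-s57))*hc3 + ((9:ℝ)/2*(2+c))*hs57sq
  clear hsq e2 e3 hUc hcr hr2 hrlb hrub hrpos he1 hclb hcub hc3 hcpos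
    hs57sq hs57pos hs57lb hs57ub hwpos hrdef htdef hcdef hs57def
  clear r c s57
  -- ### Step 3: find the parameter `s` by the intermediate value theorem
  obtain ⟨s0, hs0def⟩ : ∃ x : ℝ, x = -(Real.sqrt 6)/3 := ⟨_, rfl⟩
  have hs0sq : s0^2 = 2/3 := by
    rw [hs0def, div_pow, neg_pow]
    rw [Real.sq_sqrt (by norm_num : (0:ℝ) ≤ 6)]
    norm_num
  have hs6lb : 2.44 < Real.sqrt 6 := by
    nlinarith [Real.sq_sqrt (show (0:ℝ) ≤ 6 by norm_num), Real.sqrt_nonneg 6]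
  have hs6ub : Real.sqrt 6 < 2.45 := by
    nlinarith [Real.sq_sqrt (show (0:ℝ) ≤ 6 by norm_num), Real.sqrt_nonneg 6]
  have hs0lb : -0.817 < s0 := by rw [hs0def]; linarith
  have hs0ub : s0 < -0.813 := by rw [hs0def]; linarith
  obtain ⟨F, hFdef⟩ : ∃ F : ℝ → ℝ, F = fun x => ((x^2-1)^2 - 1/x^2)/4 := ⟨_, rfl⟩
  have hFs0 : F s0 = -(25/72) := by
    rw [hFdef]
    simp only
    rw [hs0sq]
    norm_num
  have hFstar : F (2*t) = Uconst := by
    rw [hFdef, hUt]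
    simp only
    rw [div_eq_div_iff (by norm_num) (by norm_num)]
    have h4t : (2*t)^2 ≠ 0 := pow_ne_zero 2 (by intro h; linarith)
    have ht0 : t ≠ 0 := by intro h; linarith
    field_simp
    linear_combination (16*t^3 - 2*t - 1)*ht3
  have hlt : 2*t < s0 := by linarith
  have hcont : ContinuousOn F (Set.Icc (2*t) s0) := by
    intro x hx
    have hx0 : x ≠ 0 := by
      have := hx.2
      intro h; rw [h] at this; linarith
    apply ContinuousAt.continuousWithinAt
    rw [hFdef]
    exact ((((continuousAt_id.pow 2).sub continuousAt_const).pow 2).sub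
      (continuousAt_const.div (continuousAt_id.pow 2) (pow_ne_zero 2 hx0))).div_const 4
  have hmem : K ∈ Set.Icc (F s0) (F (2*t)) := by
    rw [hFs0, hFstar]
    exact ⟨hK1, hK2.le⟩
  obtain ⟨s, hsIcc, hFs⟩ := intermediate_value_Icc' hlt.le hcont hmem
  have hsle : s ≤ s0 := hsIcc.2
  have hsge : 2*t ≤ s := hsIcc.1
  have hsneg : s < 0 := by linarith
  have hs0ne : s ≠ 0 := ne_of_lt hsneg
  have hsgt : 2*t < s := by
    rcases eq_or_lt_of_le hsge with h | h
    · exfalso; rw [← h] at hFs; rw [hFstar] at hFs; linarith [hFs ▸ hK2]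
    · exact h
  have hKs : K = ((s^2-1)^2 - 1/s^2)/4 := by rw [← hFs, hFdef]
  have hs23 : 2/3 ≤ s^2 := by nlinarith
  -- cubic inequalities for `s`
  have hstar3 : (2*t)^3 - 2*(2*t) + 2 = 0 := by linear_combination 2*ht3
  have hcubp : 0 < s^3 - 2*s + 2 := by
    have hq2 : 0 < s^2 + s*(2*t) + (2*t)^2 - 2 := by
      nlinarith [mul_nonneg (show (0:ℝ) ≤ -s - 0.813 by linarith)
        (show (0:ℝ) ≤ -(2*t) - 1.76 by linarith)]
    nlinarith [mul_pos (sub_pos.mpr hsgt) hq2]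
  have hcubm : s^3 - 2*s - 2 < 0 := by
    nlinarith [mul_nonneg (show (0:ℝ) ≤ -s by linarith) (sq_nonneg (s + 0.82)),
      sq_nonneg (s + 0.815)]
  have hcubq : s^3 - s - 1 < 0 := by
    nlinarith [mul_nonneg (show (0:ℝ) ≤ -s by linarith) (sq_nonneg (s + 0.82)),
      sq_nonneg (s + 0.84)]
  clear hstar3 hFs hsIcc hmem hcont hlt hFstar hFs0 hFdef hs0sq hs6lb hs6ub
    hs0lb hs0ub hs0def hsle hsge hsgt ht3 htlb htub hUt hK1 hK2
  clear F s0 t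
  -- ### Step 4: the factorization data
  obtain ⟨m, hmdef⟩ : ∃ x : ℝ, x = (s^2 - 1 + 1/s)/2 := ⟨_, rfl⟩
  obtain ⟨q, hqdef⟩ : ∃ x : ℝ, x = (s^2 - 1 - 1/s)/2 := ⟨_, rfl⟩
  have hqm : q - m = -(1/s) := by rw [hmdef, hqdef]; ring
  have hqpos : 0 < q := by
    have h1 : s^2 - 1 - 1/s = (s^3 - s - 1)/s := by field_simp
    rw [hqdef, h1]
    have := div_pos_of_neg_of_neg hcubq hsneg
    linarith
  have hdisc : 0 < s^2 - 4*m := by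
    have h1 : s^2 - 4*m = (-(s^3 - 2*s + 2))/s := by rw [hmdef]; field_simp; ring
    rw [h1]
    exact div_pos_of_neg_of_neg (by linarith) hsneg
  have hposdef : s^2 < 4*q := by
    have h1 : 4*q - s^2 = (s^3 - 2*s - 2)/s := by rw [hqdef]; field_simp; ring
    nlinarith [div_pos_of_neg_of_neg hcubm hsneg]
  obtain ⟨d, hddef⟩ : ∃ x : ℝ, x = Real.sqrt (s^2 - 4*m) := ⟨_, rfl⟩
  have hdpos : 0 < d := hddef ▸ Real.sqrt_pos.mpr hdisc
  have hd0 : d ≠ 0 := ne_of_gt hdpos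
  have hd2 : d^2 = s^2 - 4*m := hddef ▸ Real.sq_sqrt hdisc.le
  obtain ⟨a, hadef⟩ : ∃ x : ℝ, x = (s+d)/2 := ⟨_, rfl⟩
  obtain ⟨b, hbdef⟩ : ∃ x : ℝ, x = (s-d)/2 := ⟨_, rfl⟩
  obtain ⟨Pa, hPadef⟩ : ∃ x : ℝ, x = a^2 + s*a + q := ⟨_, rfl⟩
  obtain ⟨Pb, hPbdef⟩ : ∃ x : ℝ, x = b^2 + s*b + q := ⟨_, rfl⟩
  have hPapos : 0 < Pa := by rw [hPadef]; nlinarith [sq_nonneg (2*a + s)]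
  have hPbpos : 0 < Pb := by rw [hPbdef]; nlinarith [sq_nonneg (2*b + s)]
  have hPP : Pa * Pb = 2*s^4 - 2*s^2 + 1/s^2 := by
    have ha2 : a^2 = s*a - m := by rw [hadef]; linear_combination ((1:ℝ)/4)*hd2
    have hb2 : b^2 = s*b - m := by rw [hbdef]; linear_combination ((1:ℝ)/4)*hd2
    have hab : a*b = m := by rw [hadef, hbdef]; linear_combination (-(1:ℝ)/4)*hd2
    have habs : a + b = s := by rw [hadef, hbdef]; ring
    have h1 : Pa * Pb = 4*s^2*(a*b) + 2*s*(a+b)*(q-m) + (q-m)^2 := by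
      rw [hPadef, hPbdef]
      linear_combination (b^2 + s*b + q)*ha2 + (s*a - m + s*a + q)*hb2
    rw [h1, hab, habs, hqm, hmdef]
    field_simp
    ring
  -- ### Step 5: the normalizing scalars
  obtain ⟨sPP, hsPPdef⟩ : ∃ x : ℝ, x = Real.sqrt (Pa*Pb) := ⟨_, rfl⟩
  have hsPPpos : 0 < sPP := hsPPdef ▸ Real.sqrt_pos.mpr (mul_pos hPapos hPbpos)
  have hsPP2 : sPP^2 = Pa*Pb := hsPPdef ▸ Real.sq_sqrt (mul_pos hPapos hPbpos).le
  obtain ⟨g, hgdef⟩ : ∃ x : ℝ, x = Real.sqrt (d^2/sPP) := ⟨_, rfl⟩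
  have hgpos : 0 < g := hgdef ▸ Real.sqrt_pos.mpr (by positivity)
  have hg2 : g^2 = d^2/sPP := hgdef ▸ Real.sq_sqrt (by positivity)
  obtain ⟨al, haldef⟩ : ∃ x : ℝ, x = Real.sqrt (d^2/(Pb*g)) := ⟨_, rfl⟩
  have halpos : 0 < al := haldef ▸ Real.sqrt_pos.mpr (by positivity)
  have hal0 : al ≠ 0 := ne_of_gt halpos
  have hal2 : al^2 = d^2/(Pb*g) := haldef ▸ Real.sq_sqrt (by positivity)
  obtain ⟨cc, hccdef⟩ : ∃ x : ℝ, x = -(3*s^2 - 2)/sPP := ⟨_, rfl⟩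
  have h3s2 : 0 ≤ 3*s^2 - 2 := by linarith
  have hccle : cc ≤ 0 := by
    rw [hccdef, neg_div]
    exact neg_nonpos.mpr (div_nonneg h3s2 hsPPpos.le)
  have hkey : (3*s^2-2)^2 < 4*(Pa*Pb) := by
    have h1 : (3*s^2-2)^2 - 4*(Pa*Pb) = (s^3-2*s+2)*(s^3-2*s-2)/s^2 := by
      rw [hPP]; field_simp; ring
    nlinarith [div_neg_of_neg_of_pos (mul_neg_of_pos_of_neg hcubp hcubm)
      (by positivity : (0:ℝ) < s^2)]
  have hccgt : -2 < cc := by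
    have h2 : (3*s^2-2)^2 < (2*sPP)^2 := by
      have h3 : (2*sPP)^2 = 4*(Pa*Pb) := by linear_combination 4*hsPP2
      rw [h3]; exact hkey
    have h4 : 3*s^2-2 < 2*sPP := lt_of_pow_lt_pow_left₀ 2 (by positivity) h2
    rw [hccdef, neg_div, neg_lt_neg_iff, div_lt_iff₀ hsPPpos]
    linarith
  clear hkey hPP hposdef hdisc hqpos hqm h3s2 hcubp hcubm hcubq hs23 hsneg
    hddef hgdef haldef hsPPdef
  -- ### Step 6: the matrix `A` and the final identity
  refine ⟨!![-b*al/d, a*(g/al)/d; -al/d, (g/al)/d], cc, ?_, hccgt, hccle, ?_⟩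
  · rw [Matrix.isUnit_iff_isUnit_det, Matrix.det_fin_two_of]
    have h : -b*al/d * ((g/al)/d) - a*(g/al)/d * (-al/d) = g/d := by
      rw [hadef, hbdef]
      field_simp
      ring
    rw [h]
    exact (isUnit_iff_ne_zero).mpr (by positivity)
  · intro v
    have hX : (Matrix.mulVec !![-b*al/d, a*(g/al)/d; -al/d, (g/al)/d] v) 0
        = (-b*al*(v 0) + a*(g/al)*(v 1))/d := by
      simp [Matrix.mulVec, dotProduct, Fin.sum_univ_two, Matrix.vecHead, Matrix.vecTail]
      ring
    have hY : (Matrix.mulVec !![-b*al/d, a*(g/al)/d; -al/d, (g/al)/d] v) 1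
        = (-al*(v 0) + (g/al)*(v 1))/d := by
      simp [Matrix.mulVec, dotProduct, Fin.sum_univ_two, Matrix.vecHead, Matrix.vecTail]
      ring
    rw [hLK, hX, hY]
    obtain ⟨u, hu⟩ : ∃ x : ℝ, x = v 0 := ⟨_, rfl⟩
    obtain ⟨w, hw⟩ : ∃ x : ℝ, x = v 1 := ⟨_, rfl⟩
    rw [← hu, ← hw]
    obtain ⟨X, hXd⟩ : ∃ x : ℝ, x = (-b*al*u + a*(g/al)*w)/d := ⟨_, rfl⟩
    obtain ⟨Y, hYd⟩ : ∃ x : ℝ, x = (-al*u + (g/al)*w)/d := ⟨_, rfl⟩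
    rw [← hXd, ← hYd]
    have k1 : X - a*Y = al*u := by
      rw [hXd, hYd, hadef, hbdef]
      field_simp
      ring
    have k2 : X - b*Y = (g/al)*w := by
      rw [hXd, hYd, hadef, hbdef]
      field_simp
      ring
    have k3 : X^2 - s*X*Y + m*Y^2 = g*(u*w) := by
      have e : X^2 - s*X*Y + m*Y^2 = (X - a*Y)*(X - b*Y) := by
        rw [hadef, hbdef]
        linear_combination (Y^2/4)*hd2
      rw [e, k1, k2]
      field_simp
    have k4 : g*(X^2 + s*X*Y + q*Y^2) = u^2 + cc*u*w + w^2 := by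
      have e4 : X^2 + s*X*Y + q*Y^2
          = (al^2*Pb*u^2 - (g*(3*s^2 - d^2 + 4*q)/2)*u*w + (g/al)^2*Pa*w^2)/d^2 := by
        rw [hXd, hYd, hPadef, hPbdef, hadef, hbdef]
        field_simp
        ring
      rw [e4]
      have c1 : g*(al^2*Pb)/d^2 = 1 := by
        rw [hal2]
        field_simp
      have c2 : g*((g/al)^2*Pa)/d^2 = 1 := by
        rw [div_pow, hal2]
        rw [show g^2/(d^2/(Pb*g)) = g^3*Pb/d^2 by field_simp]
        rw [show g*(g^3*Pb/d^2*Pa)/d^2 = (g^2)^2*(Pa*Pb)/d^4 by ring]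
        rw [hg2, ← hsPP2]
        field_simp
      have c3 : g*(g*(3*s^2 - d^2 + 4*q)/2)/d^2 = -cc := by
        have hnum : 3*s^2 - d^2 + 4*q = 2*(3*s^2-2) := by
          rw [hd2, hmdef, hqdef]
          field_simp
          ring
        rw [hnum, hccdef,
          show g*(g*(2*(3*s^2-2))/2)/d^2 = g^2*(3*s^2-2)/d^2 by ring, hg2]
        field_simp
      linear_combination (u^2)*c1 + (w^2)*c2 + (-(u*w))*c3
    have k5 : X^4 - X^2*Y^2 + 1*X*Y^3 + K*Y^4
        = (X^2 - s*X*Y + m*Y^2)*(X^2 + s*X*Y + q*Y^2) := by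
      rw [hmdef, hqdef, hKs]
      field_simp
      ring
    calc X^4 - X^2*Y^2 + 1*X*Y^3 + K*Y^4
        = (X^2 - s*X*Y + m*Y^2)*(X^2 + s*X*Y + q*Y^2) := k5
      _ = (g*(u*w))*(X^2 + s*X*Y + q*Y^2) := by rw [k3]
      _ = u*w*(g*(X^2 + s*X*Y + q*Y^2)) := by ring
      _ = u*w*(u^2 + cc*u*w + w^2) := by rw [k4]
end
end

section
/- The curve x⁴ − x²y² + xy³ + Uy⁴ = 1 is singular at infinity: set U = (1/24)·(4 + (31+3√57)·(46+6√57)^{−1/3} + (100+12√57)·(46+6√57)^{−2/3}). Then there exists a point p ∈ ℝ² with p ≠ 0, p in the closure of the cone ℝ_{>0}·H_{1,U}, h_{1,U}(p) = 0, and the differential of h_{1,U} at p equal to zero. -/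
/-!
Common definitions: the quartic polynomial `hLK L K (x,y) = x⁴ − x²y² + L·x·y³ + K·y⁴` on ℝ²,
the Hessian determinant of a function on ℝ², and the curve `Hcurve L K = H_{L,K}`,
the connected component containing (1,0) of the hyperbolic points on the level set {h = 1}.
-/

noncomputable section
open Matrix

namespace SingAux

def pr (i : Fin 2) : (Fin 2 → ℝ) →L[ℝ] ℝ := ContinuousLinearMap.proj i

lemma pr_hasFDerivAt (i : Fin 2) (p : Fin 2 → ℝ) :
    HasFDerivAt (fun v : Fin 2 → ℝ => pr i v) (pr i) p :=
  (pr i).hasFDerivAt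

def grad (L K : ℝ) (p : Fin 2 → ℝ) : (Fin 2 → ℝ) →L[ℝ] ℝ :=
  (4 * p 0 ^ 3 - 2 * p 0 * p 1 ^ 2 + L * p 1 ^ 3) • pr 0 +
  (- (2 * p 0 ^ 2) * p 1 + 3 * L * p 0 * p 1 ^ 2 + 4 * K * p 1 ^ 3) • pr 1

lemma hasFDerivAt_hLK (L K : ℝ) (p : Fin 2 → ℝ) :
    HasFDerivAt (hLK L K) (grad L K p) p := by
  have h0 := pr_hasFDerivAt 0 p
  have h1 := pr_hasFDerivAt 1 p
  have H := (((h0.mul h0).mul (h0.mul h0)).sub ((h0.mul h0).mul (h1.mul h1))).add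
      (((h0.const_mul L).mul (h1.mul (h1.mul h1))).add
        (((h1.mul h1).mul (h1.mul h1)).const_mul K))
  have hfun : hLK L K = fun v : Fin 2 → ℝ =>
      (pr 0 v * pr 0 v) * (pr 0 v * pr 0 v) - (pr 0 v * pr 0 v) * (pr 1 v * pr 1 v) +
        (L * pr 0 v * (pr 1 v * (pr 1 v * pr 1 v)) +
          K * ((pr 1 v * pr 1 v) * (pr 1 v * pr 1 v))) := by
    funext v
    simp only [hLK, pr, ContinuousLinearMap.proj_apply]
    ring
  rw [hfun]
  refine H.congr_fderiv ?_
  ext v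
  simp only [grad, pr, ContinuousLinearMap.smul_apply, ContinuousLinearMap.add_apply,
    ContinuousLinearMap.sub_apply, ContinuousLinearMap.proj_apply, smul_eq_mul, Pi.mul_apply]
  ring

def grad2 (L K : ℝ) (p : Fin 2 → ℝ) :
    (Fin 2 → ℝ) →L[ℝ] ((Fin 2 → ℝ) →L[ℝ] ℝ) :=
  (((12 * p 0 ^ 2 - 2 * p 1 ^ 2) • pr 0 +
      (- (4 * p 0) * p 1 + 3 * L * p 1 ^ 2) • pr 1).smulRight (pr 0)) +
  (((- (4 * p 0) * p 1 + 3 * L * p 1 ^ 2) • pr 0 +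
      (- (2 * p 0 ^ 2) + 6 * L * p 0 * p 1 + 12 * K * p 1 ^ 2) • pr 1).smulRight (pr 1))

lemma hasFDerivAt_grad (L K : ℝ) (p : Fin 2 → ℝ) :
    HasFDerivAt (fun q => grad L K q) (grad2 L K p) p := by
  have h0 := pr_hasFDerivAt 0 p
  have h1 := pr_hasFDerivAt 1 p
  have hc1 := ((((h0.mul h0).mul h0).const_mul 4).sub
      ((h0.const_mul 2).mul (h1.mul h1))).add (((h1.mul h1).mul h1).const_mul L)
  have hc2 := ((((h0.mul h0).const_mul 2).neg.mul h1).add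
      ((h0.const_mul (3 * L)).mul (h1.mul h1))).add (((h1.mul h1).mul h1).const_mul (4 * K))
  have H := (hc1.smul_const (pr 0)).add (hc2.smul_const (pr 1))
  have hfun : (fun q => grad L K q) = fun q : Fin 2 → ℝ =>
      (4 * (pr 0 q * pr 0 q * pr 0 q) - 2 * pr 0 q * (pr 1 q * pr 1 q) +
          L * (pr 1 q * pr 1 q * pr 1 q)) • pr 0 +
      (- (2 * (pr 0 q * pr 0 q)) * pr 1 q + 3 * L * pr 0 q * (pr 1 q * pr 1 q) +
          4 * K * (pr 1 q * pr 1 q * pr 1 q)) • pr 1 := by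
    funext q
    simp only [grad, pr, ContinuousLinearMap.proj_apply]
    ring_nf
  rw [hfun]
  refine H.congr_fderiv ?_
  refine ContinuousLinearMap.ext fun v => ContinuousLinearMap.ext fun w => ?_
  simp only [grad2, pr, ContinuousLinearMap.smul_apply, ContinuousLinearMap.add_apply,
    ContinuousLinearMap.sub_apply, ContinuousLinearMap.proj_apply,
    ContinuousLinearMap.smulRight_apply, ContinuousLinearMap.neg_apply, smul_eq_mul,
    Pi.mul_apply, Pi.neg_apply]
  ring

lemma hess_eq (L K : ℝ) (p : Fin 2 → ℝ) :
    hessDet2 (hLK L K) p =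
      (12 * p 0 ^ 2 - 2 * p 1 ^ 2) *
        (- (2 * p 0 ^ 2) + 6 * L * p 0 * p 1 + 12 * K * p 1 ^ 2) -
      (- (4 * p 0) * p 1 + 3 * L * p 1 ^ 2) ^ 2 := by
  have hf : fderiv ℝ (hLK L K) = fun q => grad L K q :=
    funext fun q => (hasFDerivAt_hLK L K q).fderiv
  have h2 : ∀ i j : Fin 2,
      iteratedFDeriv ℝ 2 (hLK L K) p ![Pi.single i 1, Pi.single j 1] =
        grad2 L K p (Pi.single i 1) (Pi.single j 1) := by
    intro i j
    rw [iteratedFDeriv_two_apply, hf, (hasFDerivAt_grad L K p).fderiv]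
    simp
  unfold hessDet2
  rw [Matrix.det_fin_two]
  simp only [Matrix.of_apply, h2]
  simp only [grad2, pr, ContinuousLinearMap.smul_apply, ContinuousLinearMap.add_apply,
    ContinuousLinearMap.proj_apply, ContinuousLinearMap.smulRight_apply, smul_eq_mul,
    Pi.single_apply]
  norm_num
  ring


/-- cube root characterization -/
lemma rpow_third_eq {x y : ℝ} (hy : 0 < y) (h : y ^ 3 = x) : x ^ ((1:ℝ)/3) = y := by
  rw [← h, ← Real.rpow_natCast y 3, ← Real.rpow_mul hy.le]
  norm_num

/-- homogeneity of hLK -/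
lemma hLK_smul (L K c : ℝ) (v : Fin 2 → ℝ) :
    hLK L K (c • v) = c ^ 4 * hLK L K v := by
  simp only [hLK, Pi.smul_apply, smul_eq_mul]
  ring

lemma tm_lt {t m : ℝ} (ht0 : t < 0) (hm1 : 1/t < m) : t * m < 1 := by
  have := mul_lt_mul_of_neg_left hm1 ht0
  rwa [mul_one_div_cancel (ne_of_lt ht0)] at this

lemma fpos {t U m : ℝ} (ht0 : t < 0) (hcub : 4*t^3 - 2*t + 1 = 0)
    (hU : U = (2*t^2 - 3*t)/4) (hm1 : 1/t < m) :
    0 < 1 - m^2 + m^3 + U*m^4 := by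
  have htm := tm_lt ht0 hm1
  have h2t : 0 < 2*t^2 - 1 := by nlinarith [mul_pos_of_neg_of_neg ht0 ht0]
  have hq : 0 < 1 + 2*t*m + (3*t^2 - 1)*m^2 := by
    rcases eq_or_ne m 0 with rfl | hm0
    · norm_num
    · have hm2' : 0 < m^2 := lt_of_le_of_ne (sq_nonneg m) (Ne.symm (pow_ne_zero 2 hm0))
      nlinarith [sq_nonneg (1 + t*m), mul_pos h2t hm2']
  have hfact : 1 - m^2 + m^3 + U * m^4
      = (1 - t*m)^2 * (1 + 2*t*m + (3*t^2-1)*m^2) := by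
    rw [hU]
    linear_combination (m^3 - (3/4)*t*m^4) * hcub
  rw [hfact]
  exact mul_pos (pow_pos (by linarith) 2) hq

lemma Dneg {t U m : ℝ} (ht0 : t < 0) (hcub : 4*t^3 - 2*t + 1 = 0)
    (hU : U = (2*t^2 - 3*t)/4) (hm1 : 1/t < m) (hm2 : m ≤ 0) :
    (12 - 2*m^2) * (-2 + 6*m + 12*U*m^2) - (3*m^2 - 4*m)^2 < 0 := by
  have htm := tm_lt ht0 hm1
  have ht2 : 0 < t^2 := by nlinarith [mul_pos_of_neg_of_neg ht0 ht0]
  have ht4 : 0 < t^4 := by nlinarith [ht2]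
  have h1 : 0 < 12*t^2 - 18*t + 9 := by nlinarith [sq_nonneg (2*t - 3/2)]
  have h2 : 0 < 48*t^2 - 30*t + 6 := by nlinarith [ht0, ht2]
  have h3 : -(12*t^2) + 6*t < 0 := by nlinarith [ht0, ht2]
  have hQ : -(12*t^2 - 18*t + 9) * t^2 * m^2 + (48*t^2 - 30*t + 6)*m
      + (-(12*t^2) + 6*t) < 0 := by
    nlinarith [mul_nonneg (mul_nonneg h1.le ht2.le) (sq_nonneg m),
      mul_nonpos_of_nonneg_of_nonpos h2.le hm2]
  have hfact : t^4 * ((12 - 2*m^2) * (-2 + 6*m + 12*U*m^2) - (3*m^2 - 4*m)^2)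
      = (t*m - 1)^2 * (-(12*t^2 - 18*t + 9) * t^2 * m^2 + (48*t^2 - 30*t + 6)*m
          + (-(12*t^2) + 6*t)) := by
    rw [hU]
    linear_combination (18*t^3*m^2 - 27*t^2*m^2 - 6*t^2*m^3 + 12*t*m^2 + 18*t*m
      - 6*t - 6*m) * hcub
  have htm1 : t*m - 1 < 0 := by linarith
  have hsq : 0 < (t*m - 1)^2 := by nlinarith [mul_pos_of_neg_of_neg htm1 htm1]
  nlinarith [hfact, mul_neg_of_pos_of_neg hsq hQ, ht4]

end SingAux

open SingAux in
/-- **The curve `x⁴ − x²y² + xy³ + Uy⁴ = 1` is singular at infinity.**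
There is a nonzero point `p` in the closure of the cone `ℝ_{>0}·H_{1,U}` with
`h_{1,U}(p) = 0` and vanishing differential of `h_{1,U}` at `p`. -/
theorem curve_1U_singular_at_infinity :
    ∃ p : Fin 2 → ℝ, p ≠ 0 ∧
      p ∈ closure {x : Fin 2 → ℝ | ∃ l : ℝ, 0 < l ∧ ∃ q ∈ Hcurve 1 Uconst, x = l • q} ∧
      hLK 1 Uconst p = 0 ∧ fderiv ℝ (hLK 1 Uconst) p = 0 := by
  have hs0 : (0:ℝ) < Real.sqrt 57 := Real.sqrt_pos.2 (by norm_num)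
  set s : ℝ := Real.sqrt 57 with hs_def
  have hs2 : s ^ 2 = 57 := Real.sq_sqrt (by norm_num)
  have hs9 : s < 9 := by nlinarith
  set A : ℝ := ((9 - s)/72) ^ ((1:ℝ)/3) with hA_def
  set B : ℝ := ((9 + s)/72) ^ ((1:ℝ)/3) with hB_def
  have h9m : (0:ℝ) < (9 - s)/72 := by linarith
  have h9p : (0:ℝ) < (9 + s)/72 := by linarith
  have hA0 : 0 < A := Real.rpow_pos_of_pos h9m _
  have hB0 : 0 < B := Real.rpow_pos_of_pos h9p _
  have hA3 : A ^ 3 = (9 - s)/72 := by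
    rw [hA_def, ← Real.rpow_natCast (((9 - s)/72) ^ ((1:ℝ)/3)) 3, ← Real.rpow_mul h9m.le]
    norm_num
  have hB3 : B ^ 3 = (9 + s)/72 := by
    rw [hB_def, ← Real.rpow_natCast (((9 + s)/72) ^ ((1:ℝ)/3)) 3, ← Real.rpow_mul h9p.le]
    norm_num
  have hAB : A * B = 1/6 := by
    have h1 : (A * B) ^ 3 = (1/6:ℝ)^3 := by
      rw [mul_pow, hA3, hB3]
      linear_combination (-(1:ℝ)/5184) * hs2
    nlinarith [mul_pos hA0 hB0, sq_nonneg (A*B - 1/6), sq_nonneg (A*B + 1/6)]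
  set t : ℝ := -(A + B) with ht_def
  have ht0 : t < 0 := by rw [ht_def]; nlinarith
  have htne : t ≠ 0 := ne_of_lt ht0
  have hcub : 4 * t ^ 3 - 2 * t + 1 = 0 := by
    rw [ht_def]
    linear_combination (-4:ℝ) * hA3 + (-4:ℝ) * hB3 + (-12*(A+B)) * hAB
  -- value of Uconst
  have hc0 : (0:ℝ) < 46 + 6 * s := by linarith
  have hcr : (46 + 6 * s) ^ ((1:ℝ)/3) = 12 * B ^ 2 := by
    refine rpow_third_eq (by positivity) ?_
    have : (12 * B ^ 2) ^ 3 = 1728 * (B ^ 3) ^ 2 := by ring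
    rw [this, hB3]
    linear_combination ((1:ℝ)/3) * hs2
  have hneg1 : (46 + 6 * s) ^ (-(1:ℝ)/3) = (12 * B ^ 2)⁻¹ := by
    rw [show (-(1:ℝ)/3) = -((1:ℝ)/3) by norm_num, Real.rpow_neg hc0.le, hcr]
  have hneg2 : (46 + 6 * s) ^ (-(2:ℝ)/3) = ((12 * B ^ 2) ^ 2)⁻¹ := by
    rw [show (-(2:ℝ)/3) = -((2:ℝ)/3) by norm_num, Real.rpow_neg hc0.le]
    congr 1
    rw [show ((2:ℝ)/3) = ((1:ℝ)/3) * (2:ℕ) by norm_num, Real.rpow_mul hc0.le,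
      Real.rpow_natCast, hcr]
  have hi1 : ((12 * B ^ 2):ℝ)⁻¹ = 3 * A ^ 2 := by
    have h : (12 * B ^ 2) * (3 * A ^ 2) = 1 := by
      linear_combination (36*(A*B) + 6) * hAB
    field_simp
    linear_combination -h
  have hi2 : (((12 * B ^ 2) ^ 2):ℝ)⁻¹ = 9 * A ^ 4 := by
    have h : ((12 * B ^ 2) ^ 2) * (9 * A ^ 4) = 1 := by
      linear_combination (1296*(A*B)^3 + 216*(A*B)^2 + 36*(A*B) + 6) * hAB
    field_simp
    linear_combination -h
  have hA_val : (9 + s) * A = 12 * B ^ 2 := by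
    linear_combination (-72*A) * hB3 + (72*B^2) * hAB
  have hUraw : Uconst = (1/24) * (4 + (31 + 3*s) * (3*A^2) + (100 + 12*s) * (9*A^4)) := by
    rw [Uconst, ← hs_def, hneg1, hneg2, hi1, hi2]
  have hUval : Uconst = (2 * t ^ 2 - 3 * t)/4 := by
    have hfac : (0:ℝ) < 24 * (9 + s) ^ 4 := by positivity
    refine mul_left_cancel₀ (ne_of_gt hfac) ?_
    rw [hUraw, ht_def]
    linear_combination
      ((-13122) + (-4374)*s + (-486)*s^2 + (-18)*s^3 + (-17496)*B + (-5832)*B*s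
        + (-648)*B*s^2 + (-24)*B*s^3 + (78732)*B^2 + (26244)*B^2*s + (2916)*B^2*s^2
        + (108)*B^2*s^3 + (1555200)*B^6 + (186624)*B^6*s + (59049)*A + (26244)*A*s
        + (4374)*A*s^2 + (324)*A*s^3 + (9)*A*s^4 + (1166400)*A*B^4 + (269568)*A*B^4*s
        + (15552)*A*B^4*s^2 + (874800)*A^2*B^2 + (299376)*A^2*B^2*s + (34128)*A^2*B^2*s^2
        + (1296)*A^2*B^2*s^3 + (656100)*A^3 + (297432)*A^3*s + (50544)*A^3*s^2
        + (3816)*A^3*s^3 + (108)*A^3*s^4) * hA_val +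
      ((-209952) + (-69984)*s + (-7776)*s^2 + (-288)*s^3 + (944784)*B + (314928)*B*s
        + (34992)*B*s^2 + (1296)*B*s^3 + (2332800)*B^2 + (539136)*B^2*s + (31104)*B^2*s^2
        + (18662400)*B^5 + (2239488)*B^5*s) * hB3 +
      ((-972)*B^2 + (-216)*B^2*s + (-12)*B^2*s^2) * hs2
  clear_value A B s t
  have h1t0 : 1 / t < 0 := one_div_neg.mpr ht0
  have hval : ∀ m : ℝ, hLK 1 Uconst ![1, m] = 1 - m^2 + m^3 + Uconst * m^4 := by
    intro m
    simp [hLK]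
  have hfpos : ∀ m ∈ Set.Ioc (1/t) 0, 0 < 1 - m^2 + m^3 + Uconst * m^4 :=
    fun m hm => fpos ht0 hcub hUval hm.1
  have hDneg : ∀ m ∈ Set.Ioc (1/t) 0,
      (12 - 2*m^2) * (-2 + 6*m + 12*Uconst*m^2) - (3*m^2 - 4*m)^2 < 0 :=
    fun m hm => Dneg ht0 hcub hUval hm.1 hm.2
  -- the curve
  set S : Set (Fin 2 → ℝ) := {p | hLK 1 Uconst p = 1 ∧ hessDet2 (hLK 1 Uconst) p < 0}
    with hS_def
  set γ : ℝ → (Fin 2 → ℝ) :=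
    fun m => (1 - m^2 + m^3 + Uconst*m^4) ^ (-(1:ℝ)/4) • ![1, m] with hγ_def
  have hγS : ∀ m ∈ Set.Ioc (1/t) 0, γ m ∈ S := by
    intro m hm
    have hf := hfpos m hm
    have hcpos : 0 < (1 - m^2 + m^3 + Uconst*m^4) ^ (-(1:ℝ)/4) :=
      Real.rpow_pos_of_pos hf _
    have hc4 : ((1 - m^2 + m^3 + Uconst*m^4) ^ (-(1:ℝ)/4))^(4:ℕ)
        = (1 - m^2 + m^3 + Uconst*m^4)⁻¹ := by
      rw [← Real.rpow_natCast ((1 - m^2 + m^3 + Uconst*m^4) ^ (-(1:ℝ)/4)) 4,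
        ← Real.rpow_mul hf.le]
      norm_num [Real.rpow_neg_one]
    constructor
    · show hLK 1 Uconst (_ • ![1,m]) = 1
      rw [hLK_smul, hval m, hc4, inv_mul_cancel₀ (ne_of_gt hf)]
    · show hessDet2 (hLK 1 Uconst) (_ • ![1,m]) < 0
      rw [hess_eq]
      have e0 : (((1 - m^2 + m^3 + Uconst*m^4) ^ (-(1:ℝ)/4)) • (![1,m]:Fin 2 → ℝ)) 0
          = (1 - m^2 + m^3 + Uconst*m^4) ^ (-(1:ℝ)/4) := by simp
      have e1 : (((1 - m^2 + m^3 + Uconst*m^4) ^ (-(1:ℝ)/4)) • (![1,m]:Fin 2 → ℝ)) 1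
          = (1 - m^2 + m^3 + Uconst*m^4) ^ (-(1:ℝ)/4) * m := by simp
      rw [e0, e1]
      set c : ℝ := (1 - m^2 + m^3 + Uconst*m^4) ^ (-(1:ℝ)/4)
      have hrw : (12 * c ^ 2 - 2 * (c * m) ^ 2) *
            (-(2 * c ^ 2) + 6 * 1 * c * (c * m) + 12 * Uconst * (c * m) ^ 2) -
          (-(4 * c) * (c * m) + 3 * 1 * (c * m) ^ 2) ^ 2
          = c^4 * ((12 - 2*m^2) * (-2 + 6*m + 12*Uconst*m^2) - (3*m^2 - 4*m)^2) := by
        ring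
      rw [hrw]
      exact mul_neg_of_pos_of_neg (pow_pos hcpos 4) (hDneg m hm)
  have hγ0 : γ 0 = ![1, 0] := by
    rw [hγ_def]
    norm_num [Real.one_rpow]
  have hcont : ContinuousOn γ (Set.Ioc (1/t) 0) := by
    have hpoly : Continuous fun m : ℝ => 1 - m^2 + m^3 + Uconst*m^4 := by fun_prop
    have hvec : Continuous fun m : ℝ => (![1, m] : Fin 2 → ℝ) := by
      refine continuous_pi fun i => ?_
      fin_cases i
      · simpa using continuous_const
      · simpa using continuous_id'
    exact (ContinuousOn.rpow_const hpoly.continuousOn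
      (fun m hm => Or.inl (ne_of_gt (hfpos m hm)))).smul hvec.continuousOn
  have hsubH : γ '' Set.Ioc (1/t) 0 ⊆ Hcurve 1 Uconst := by
    apply IsPreconnected.subset_connectedComponentIn
    · exact isPreconnected_Ioc.image γ hcont
    · exact ⟨0, ⟨h1t0, le_refl 0⟩, hγ0⟩
    · rintro x ⟨m, hm, rfl⟩
      exact hγS m hm
  have hnt : (0:ℝ) < -t := neg_pos.2 ht0
  have hψ : ∀ m ∈ Set.Ioc (1/t) 0, ((-t) • (![1,m] : Fin 2 → ℝ)) ∈
      {x : Fin 2 → ℝ | ∃ l : ℝ, 0 < l ∧ ∃ q ∈ Hcurve 1 Uconst, x = l • q} := by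
    intro m hm
    have hf := hfpos m hm
    refine ⟨(-t) * (1 - m^2 + m^3 + Uconst*m^4) ^ ((1:ℝ)/4),
      mul_pos hnt (Real.rpow_pos_of_pos hf _), γ m, hsubH ⟨m, hm, rfl⟩, ?_⟩
    rw [hγ_def, smul_smul, mul_assoc, ← Real.rpow_add hf]
    norm_num
  have hψc : Continuous (fun m : ℝ => (-t) • (![1, m] : Fin 2 → ℝ)) := by
    have hvec : Continuous fun m : ℝ => (![1, m] : Fin 2 → ℝ) := by
      refine continuous_pi fun i => ?_
      fin_cases i
      · simpa using continuous_const
      · simpa using continuous_id'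
    exact hvec.const_smul (-t)
  have hclos : (![-t, -1] : Fin 2 → ℝ) ∈
      closure {x : Fin 2 → ℝ | ∃ l : ℝ, 0 < l ∧ ∃ q ∈ Hcurve 1 Uconst, x = l • q} := by
    have h1 : (1/t : ℝ) ∈ closure (Set.Ioc (1/t) 0) := by
      rw [closure_Ioc (ne_of_lt h1t0)]
      exact ⟨le_refl _, h1t0.le⟩
    have h2 : (fun m : ℝ => (-t) • (![1, m] : Fin 2 → ℝ)) (1/t) = ![-t, -1] := by
      funext i
      fin_cases i
      · simp
      · simp
        field_simp
    have h4 : (![-t, -1] : Fin 2 → ℝ) ∈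
        closure ((fun m : ℝ => (-t) • (![1, m] : Fin 2 → ℝ)) '' Set.Ioc (1/t) 0) :=
      image_closure_subset_closure_image hψc ⟨1/t, h1, h2⟩
    refine closure_mono ?_ h4
    rintro x ⟨m, hm, rfl⟩
    exact hψ m hm
  refine ⟨![-t, -1], ?_, hclos, ?_, ?_⟩
  · intro h
    have := congrFun h 1
    simp at this
  · show hLK 1 Uconst ![-t, -1] = 0
    simp only [hLK, Matrix.cons_val_zero, Matrix.cons_val_one, Matrix.head_cons]
    rw [hUval]
    linear_combination (t/4) * hcub
  · rw [(hasFDerivAt_hLK 1 Uconst ![-t, -1]).fderiv]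
    refine ContinuousLinearMap.ext fun v => ?_
    simp only [grad, pr, ContinuousLinearMap.smul_apply, ContinuousLinearMap.add_apply,
      ContinuousLinearMap.proj_apply, ContinuousLinearMap.zero_apply, smul_eq_mul,
      Matrix.cons_val_zero, Matrix.cons_val_one, Matrix.head_cons]
    linear_combination (-(v 0)) * hcub + (-4*(v 1)) * hUval
end
end

section
/- The curves x⁴ − x²y² + xy³ + Ky⁴ = 1 for −25/72 ≤ K < U are not singular at infinity: set U = (1/24)·(4 + (31+3√57)·(46+6√57)^{−1/3} + (100+12√57)·(46+6√57)^{−2/3}). For every real number K with −25/72 ≤ K < U and every point p ∈ ℝ² with p ≠ 0, p in the closure of the cone ℝ_{>0}·H_{1,K}, and h_{1,K}(p) = 0, the differential of h_{1,K} at p is nonzero. -/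
/-!
Common definitions: the quartic polynomial `hLK L K (x,y) = x⁴ − x²y² + L·x·y³ + K·y⁴` on ℝ²,
the Hessian determinant of a function on ℝ², and the curve `Hcurve L K = H_{L,K}`,
the connected component containing (1,0) of the hyperbolic points on the level set {h = 1}.
-/

noncomputable section
open Matrix

lemma hLK_hasFDerivAt (L K : ℝ) (p : Fin 2 → ℝ) :
    HasFDerivAt (hLK L K)
      ((4 * p 0 ^ 3 - 2 * p 0 * p 1 ^ 2 + L * p 1 ^ 3) •
          (ContinuousLinearMap.proj 0 : (Fin 2 → ℝ) →L[ℝ] ℝ)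
        + (-(2 * p 0 ^ 2 * p 1) + 3 * L * p 0 * p 1 ^ 2 + 4 * K * p 1 ^ 3) •
          (ContinuousLinearMap.proj 1 : (Fin 2 → ℝ) →L[ℝ] ℝ)) p := by
  have h0 : HasFDerivAt (fun v : Fin 2 → ℝ => v 0)
      (ContinuousLinearMap.proj 0 : (Fin 2 → ℝ) →L[ℝ] ℝ) p :=
    (ContinuousLinearMap.proj (R := ℝ) (φ := fun _ : Fin 2 => ℝ) 0).hasFDerivAt
  have h1 : HasFDerivAt (fun v : Fin 2 → ℝ => v 1)
      (ContinuousLinearMap.proj 1 : (Fin 2 → ℝ) →L[ℝ] ℝ) p :=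
    (ContinuousLinearMap.proj (R := ℝ) (φ := fun _ : Fin 2 => ℝ) 1).hasFDerivAt
  have h02 := h0.mul h0
  have h12 := h1.mul h1
  have H := (((h02.mul h02).sub (h02.mul h12)).add
      (((h12.mul h1).const_mul L).mul h0)).add (((h12.mul h12).const_mul K))
  refine (H.congr_fderiv ?_).congr_of_eventuallyEq (Filter.EventuallyEq.of_eq ?_)
  swap
  · funext v; simp only [hLK, Pi.mul_apply, Pi.sub_apply, Pi.add_apply]; ring
  · apply ContinuousLinearMap.ext; intro v
    simp [ContinuousLinearMap.proj_apply]
    ring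

lemma cubic_sq_gt (t : ℝ) (h : 4*t^3 - 2*t + 1 = 0) : 2/3 < t^2 := by
  by_contra hc
  push_neg at hc
  nlinarith [sq_nonneg (t + 1), sq_nonneg (2*t - 1), sq_nonneg (3*t + 2), sq_nonneg t, sq_nonneg (t - 1)]

lemma cubic_unique (t u : ℝ) (ht : 4*t^3 - 2*t + 1 = 0) (hu : 4*u^3 - 2*u + 1 = 0) : t = u := by
  have h2t := cubic_sq_gt t ht
  have h2u := cubic_sq_gt u hu
  have hfac : (t - u) * (4*t^2 + 4*t*u + 4*u^2 - 2) = 0 := by linear_combination ht - hu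
  have hq : 0 < 4*t^2 + 4*t*u + 4*u^2 - 2 := by nlinarith [sq_nonneg (t + u)]
  rcases mul_eq_zero.1 hfac with h | h
  · linarith
  · linarith

lemma Uconst_eq : ∃ t0 : ℝ, 4*t0^3 - 2*t0 + 1 = 0 ∧ Uconst = t0^2/2 - 3*t0/4 := by
  set s : ℝ := Real.sqrt 57 with hsdef
  have hs : s^2 = 57 := Real.sq_sqrt (by norm_num)
  have hs0 : 0 < s := Real.sqrt_pos.2 (by norm_num)
  have hA : (0:ℝ) < 46 + 6*s := by positivity
  set c : ℝ := (46 + 6*s) ^ ((1:ℝ)/3) with hcdef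
  have hc0 : 0 < c := Real.rpow_pos_of_pos hA _
  have hcne : c ≠ 0 := ne_of_gt hc0
  have hc3 : c^3 = 46 + 6*s := by
    rw [hcdef, ← Real.rpow_natCast ((46 + 6*s) ^ ((1:ℝ)/3)) 3, ← Real.rpow_mul hA.le]
    norm_num
  have hm1 : (46 + 6*s) ^ (-(1:ℝ)/3) = 1/c := by
    rw [neg_div, Real.rpow_neg hA.le, ← hcdef]
    exact (one_div _).symm
  have h23 : (46 + 6*s) ^ ((2:ℝ)/3) = c^2 := by
    rw [hcdef, ← Real.rpow_natCast ((46 + 6*s) ^ ((1:ℝ)/3)) 2, ← Real.rpow_mul hA.le]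
    norm_num
  have hm2 : (46 + 6*s) ^ (-(2:ℝ)/3) = 1/c^2 := by
    rw [neg_div, Real.rpow_neg hA.le, h23]
    exact (one_div _).symm
  have hU : Uconst = (4 + (31 + 3*s)/c + (100 + 12*s)/c^2)/24 := by
    rw [Uconst, ← hsdef, hm1, hm2]
    ring
  refine ⟨((s - 9)*c^2 - 36 - 4*s)/(24*c), ?_, ?_⟩
  · have key : 4*((s - 9)*c^2 - 36 - 4*s)^3 - 2*((s - 9)*c^2 - 36 - 4*s)*(24*c)^2 + (24*c)^3 = 0 := by
      linear_combination ((4:ℝ)*c^3*s^3 - 108*c^3*s^2 + 972*c^3*s - 2916*c^3 - 48*c*s^3 + 432*c*s^2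
          + 2736*c*s - 24624*c + 24*s^4 - 464*s^3 + 864*s^2 + 27216*s - 120312) * hc3
        + ((192:ℝ)*c^2*s + 1728*c^2 - 288*c*s^2 + 384*c*s + 19872*c + 144*s^3 - 1680*s^2
          - 8208*s + 100368) * hs
    have hrw : 4*(((s - 9)*c^2 - 36 - 4*s)/(24*c))^3 - 2*(((s - 9)*c^2 - 36 - 4*s)/(24*c)) + 1
        = (4*((s - 9)*c^2 - 36 - 4*s)^3 - 2*((s - 9)*c^2 - 36 - 4*s)*(24*c)^2 + (24*c)^3)/(24*c)^3 := by
      field_simp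
    rw [hrw, key, zero_div]
  · have key2 : ((s - 9)*c^2 - 36 - 4*s)^2 - 36*((s - 9)*c^2 - 36 - 4*s)*c - 192*c^2
        - 48*(31 + 3*s)*c - 48*(100 + 12*s) = 0 := by
      linear_combination ((1:ℝ)*c*s^2 - 18*c*s + 81*c - 36*s + 324) * hc3
        + (-(8:ℝ)*c^2 + 6*c*s - 62*c - 200) * hs
    have hdiff : (((s - 9)*c^2 - 36 - 4*s)/(24*c))^2/2 - 3*(((s - 9)*c^2 - 36 - 4*s)/(24*c))/4
        - (4 + (31 + 3*s)/c + (100 + 12*s)/c^2)/24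
        = (((s - 9)*c^2 - 36 - 4*s)^2 - 36*((s - 9)*c^2 - 36 - 4*s)*c - 192*c^2
            - 48*(31 + 3*s)*c - 48*(100 + 12*s))/(1152*c^2) := by
      field_simp
      ring
    rw [hU]
    rw [key2, zero_div] at hdiff
    linarith

/-- **The curves `x⁴ − x²y² + xy³ + Ky⁴ = 1` with `−25/72 ≤ K < U` are not singular at
infinity.** For every nonzero point `p` in the closure of the cone `ℝ_{>0}·H_{1,K}` with
`h_{1,K}(p) = 0`, the differential of `h_{1,K}` at `p` is nonzero. -/
theorem curves_1K_not_singular_at_infinity (K : ℝ)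
    (hK1 : -(25/72) ≤ K) (hK2 : K < Uconst)
    (p : Fin 2 → ℝ) (hp0 : p ≠ 0)
    (hpc : p ∈ closure {x : Fin 2 → ℝ | ∃ l : ℝ, 0 < l ∧ ∃ q ∈ Hcurve 1 K, x = l • q})
    (hpz : hLK 1 K p = 0) :
    fderiv ℝ (hLK 1 K) p ≠ 0 := by
  intro hcon
  have hfd := (hLK_hasFDerivAt 1 K p).fderiv
  have hD : ((4 * p 0 ^ 3 - 2 * p 0 * p 1 ^ 2 + 1 * p 1 ^ 3) •
          (ContinuousLinearMap.proj 0 : (Fin 2 → ℝ) →L[ℝ] ℝ)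
        + (-(2 * p 0 ^ 2 * p 1) + 3 * 1 * p 0 * p 1 ^ 2 + 4 * K * p 1 ^ 3) •
          (ContinuousLinearMap.proj 1 : (Fin 2 → ℝ) →L[ℝ] ℝ))
      = (0 : (Fin 2 → ℝ) →L[ℝ] ℝ) := hfd.symm.trans hcon
  have e1 : 4 * p 0 ^ 3 - 2 * p 0 * p 1 ^ 2 + 1 * p 1 ^ 3 = 0 := by
    have := congrArg (fun f : (Fin 2 → ℝ) →L[ℝ] ℝ => f (Pi.single 0 1)) hD
    simpa using this
  set x := p 0 with hxdef
  set y := p 1 with hydef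
  rw [hLK] at hpz
  by_cases hy : y = 0
  · have hx3 : x^3 = 0 := by rw [hy] at e1; linarith [e1]
    have hx : x = 0 := by
      exact pow_eq_zero_iff (by norm_num) |>.1 hx3
    apply hp0
    funext i
    fin_cases i
    · exact hx
    · exact hy
  · obtain ⟨t0, ht0, hUt0⟩ := Uconst_eq
    have hct : 4*(x/y)^3 - 2*(x/y) + 1 = 0 := by
      field_simp
      linear_combination e1
    have hKt : (x/y)^4 - (x/y)^2 + (x/y) + K = 0 := by
      field_simp
      linear_combination hpz
    have hteq : x/y = t0 := cubic_unique _ _ hct ht0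
    rw [hteq] at hKt
    have : K = Uconst := by
      rw [hUt0]
      linear_combination hKt - (t0/4) * ht0
    exact absurd hK2 (by rw [this]; exact lt_irrefl _)
end
end
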